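/- Let τ_n be a random variable which, with probability 1/n, is distributed as a sum of 2n i.i.d. Exp(1) random variables, and with probability 1 − 1/n as a sum of (n+1) i.i.d. Exp(1) random variables. Then for fixed s: lim_{n→∞} n·P(τ_n > ns) = ∞ if s < 1, = 1 if 1 < s < 2, and = 0 if s > 2. -/

import Mathlib

open MeasureTheory ProbabilityTheory Filter Real Set
open scoped ENNReal

/-- The law of the hitting time `τ_n`: with probability `1/n` a `Gamma(2n,1)`
distribution and with probability `1 - 1/n` a `Gamma(n+1,1)` distribution. -/
noncomputable def mixtureLaw (n : ℕ) : Measure ℝ :=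
  (ENNReal.ofReal (1 / n)) • gammaMeasure (2 * n) 1 +
    (ENNReal.ofReal (1 - 1 / n)) • gammaMeasure (n + 1) 1

-- key pointwise pdf comparison + tail bound (upper tail)
lemma gamma_tail_ub {a lam t : ℝ} (ha : 0 < a) (hl : 0 < lam) (hl1 : lam < 1) (ht : 0 ≤ t) :
    gammaMeasure a 1 (Ioi t) ≤ ENNReal.ofReal (exp (-(lam * t)) * (1 - lam) ^ (-a)) := by
  have h1l : (0:ℝ) < 1 - lam := by linarith
  set c : ℝ≥0∞ := ENNReal.ofReal (exp (-(lam * t)) * (1 - lam) ^ (-a)) with hc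
  have key : ∀ x ∈ Ioi t, gammaPDF a 1 x ≤ c * gammaPDF a (1 - lam) x := by
    intro x hx
    have hx0 : 0 ≤ x := le_trans ht (le_of_lt hx)
    rw [gammaPDF_of_nonneg hx0, gammaPDF_of_nonneg hx0, hc,
      ← ENNReal.ofReal_mul (by positivity)]
    apply ENNReal.ofReal_le_ofReal
    have hcc : (1 - lam) ^ (-a) * (1 - lam) ^ a = 1 := by
      rw [← Real.rpow_add h1l]; simp
    have hrw : exp (-(lam * t)) * (1 - lam) ^ (-a) *
        ((1 - lam) ^ a / Real.Gamma a * x ^ (a - 1) * exp (-((1 - lam) * x))) =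
        x ^ (a - 1) / Real.Gamma a * (exp (-(lam * t)) * exp (-((1 - lam) * x))) := by
      linear_combination (exp (-(lam * t)) * exp (-((1 - lam) * x)) * x ^ (a - 1)
        / Real.Gamma a) * hcc
    have e1 : exp (-(1 * x)) ≤ exp (-(lam * t)) * exp (-((1 - lam) * x)) := by
      rw [← Real.exp_add]
      apply Real.exp_le_exp.2
      nlinarith [mul_le_mul_of_nonneg_left (le_of_lt hx) hl.le]
    calc (1:ℝ) ^ a / Real.Gamma a * x ^ (a - 1) * exp (-(1 * x))
        = x ^ (a - 1) / Real.Gamma a * exp (-(1 * x)) := by rw [Real.one_rpow]; ring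
      _ ≤ x ^ (a - 1) / Real.Gamma a * (exp (-(lam * t)) * exp (-((1 - lam) * x))) := by
          apply mul_le_mul_of_nonneg_left e1 (by positivity)
      _ = _ := hrw.symm
  have hm : Measurable (gammaPDF a (1 - lam)) := (measurable_gammaPDFReal _ _).ennreal_ofReal
  calc gammaMeasure a 1 (Ioi t) = ∫⁻ x in Ioi t, gammaPDF a 1 x := by
        rw [gammaMeasure, withDensity_apply _ measurableSet_Ioi]
    _ ≤ ∫⁻ x in Ioi t, c * gammaPDF a (1 - lam) x := by
        apply setLIntegral_mono (hm.const_mul c) key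
    _ = c * ∫⁻ x in Ioi t, gammaPDF a (1 - lam) x := by
        rw [lintegral_const_mul _ hm]
    _ ≤ c * ∫⁻ x, gammaPDF a (1 - lam) x := by
        gcongr; exact Measure.restrict_le_self
    _ = c := by rw [lintegral_gammaPDF_eq_one ha h1l, mul_one]

lemma gamma_lowtail_ub {a lam t : ℝ} (ha : 0 < a) (hl : 0 < lam) :
    gammaMeasure a 1 (Iic t) ≤ ENNReal.ofReal (exp (lam * t) * (1 + lam) ^ (-a)) := by
  have h1l : (0:ℝ) < 1 + lam := by linarith
  set c : ℝ≥0∞ := ENNReal.ofReal (exp (lam * t) * (1 + lam) ^ (-a)) with hc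
  have key : ∀ x ∈ Iic t, gammaPDF a 1 x ≤ c * gammaPDF a (1 + lam) x := by
    intro x hx
    rcases lt_or_ge x 0 with hx0 | hx0
    · rw [gammaPDF_of_neg hx0]; exact zero_le
    rw [gammaPDF_of_nonneg hx0, gammaPDF_of_nonneg hx0, hc,
      ← ENNReal.ofReal_mul (by positivity)]
    apply ENNReal.ofReal_le_ofReal
    have hcc : (1 + lam) ^ (-a) * (1 + lam) ^ a = 1 := by
      rw [← Real.rpow_add h1l]; simp
    have hrw : exp (lam * t) * (1 + lam) ^ (-a) *
        ((1 + lam) ^ a / Real.Gamma a * x ^ (a - 1) * exp (-((1 + lam) * x))) =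
        x ^ (a - 1) / Real.Gamma a * (exp (lam * t) * exp (-((1 + lam) * x))) := by
      linear_combination (exp (lam * t) * exp (-((1 + lam) * x)) * x ^ (a - 1)
        / Real.Gamma a) * hcc
    have e1 : exp (-(1 * x)) ≤ exp (lam * t) * exp (-((1 + lam) * x)) := by
      rw [← Real.exp_add]
      apply Real.exp_le_exp.2
      have : lam * x ≤ lam * t := mul_le_mul_of_nonneg_left hx hl.le
      nlinarith
    calc (1:ℝ) ^ a / Real.Gamma a * x ^ (a - 1) * exp (-(1 * x))
        = x ^ (a - 1) / Real.Gamma a * exp (-(1 * x)) := by rw [Real.one_rpow]; ring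
      _ ≤ x ^ (a - 1) / Real.Gamma a * (exp (lam * t) * exp (-((1 + lam) * x))) := by
          apply mul_le_mul_of_nonneg_left e1 (by positivity)
      _ = _ := hrw.symm
  have hm : Measurable (gammaPDF a (1 + lam)) := (measurable_gammaPDFReal _ _).ennreal_ofReal
  calc gammaMeasure a 1 (Iic t) = ∫⁻ x in Iic t, gammaPDF a 1 x := by
        rw [gammaMeasure, withDensity_apply _ measurableSet_Iic]
    _ ≤ ∫⁻ x in Iic t, c * gammaPDF a (1 + lam) x := by
        apply setLIntegral_mono (hm.const_mul c) key
    _ = c * ∫⁻ x in Iic t, gammaPDF a (1 + lam) x := by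
        rw [lintegral_const_mul _ hm]
    _ ≤ c * ∫⁻ x, gammaPDF a (1 + lam) x := by
        gcongr; exact Measure.restrict_le_self
    _ = c := by rw [lintegral_gammaPDF_eq_one ha h1l, mul_one]

lemma toReal_tail_ub {a lam t : ℝ} (ha : 0 < a) (hl : 0 < lam) (hl1 : lam < 1) (ht : 0 ≤ t) :
    (gammaMeasure a 1 (Ioi t)).toReal ≤ exp (-(lam * t)) * (1 - lam) ^ (-a) :=
  ENNReal.toReal_le_of_le_ofReal
    (mul_nonneg (exp_nonneg _) (Real.rpow_nonneg (by linarith) _))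
    (gamma_tail_ub ha hl hl1 ht)

lemma toReal_sum_one {a : ℝ} (ha : 0 < a) (t : ℝ) :
    (gammaMeasure a 1 (Iic t)).toReal + (gammaMeasure a 1 (Ioi t)).toReal = 1 := by
  have : IsProbabilityMeasure (gammaMeasure a 1) := isProbabilityMeasure_gammaMeasure ha one_pos
  rw [← ENNReal.toReal_add (measure_ne_top _ _) (measure_ne_top _ _),
    ← measure_union (Iic_disjoint_Ioi le_rfl) measurableSet_Ioi, Iic_union_Ioi,
    measure_univ, ENNReal.toReal_one]

lemma toReal_tail_lb {a lam t : ℝ} (ha : 0 < a) (hl : 0 < lam) :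
    1 - exp (lam * t) * (1 + lam) ^ (-a) ≤ (gammaMeasure a 1 (Ioi t)).toReal := by
  have h := ENNReal.toReal_le_of_le_ofReal
    (mul_nonneg (exp_nonneg _) (Real.rpow_nonneg (by linarith) _))
    (gamma_lowtail_ub ha hl (t := t))
  linarith [toReal_sum_one ha t]

lemma toReal_tail_le_one {a : ℝ} (ha : 0 < a) (t : ℝ) :
    (gammaMeasure a 1 (Ioi t)).toReal ≤ 1 := by
  have : IsProbabilityMeasure (gammaMeasure a 1) := isProbabilityMeasure_gammaMeasure ha one_pos
  exact ENNReal.toReal_le_of_le_ofReal zero_le_one (by simpa using prob_le_one)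

lemma exists_lam_lt (u : ℝ) (hu : u < 1) : ∃ lam : ℝ, 0 < lam ∧ exp (lam * u) < 1 + lam := by
  set lam := (1 - u) / (1 + |u|) with hlam
  have hd : (0:ℝ) < 1 + |u| := by positivity
  have hlp : 0 < lam := div_pos (by linarith) hd
  refine ⟨lam, hlp, ?_⟩
  rcases le_or_gt u 0 with hu0 | hu0
  · have : exp (lam * u) ≤ 1 :=
      Real.exp_le_one_iff.2 (mul_nonpos_of_nonneg_of_nonpos hlp.le hu0)
    linarith
  · have habs : |u| = u := abs_of_pos hu0
    have heq : lam * (1 + u) = 1 - u := by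
      rw [hlam, habs]; field_simp
    have hy : lam * u < 1 := by nlinarith
    have h1 : 1 - lam * u ≤ exp (-(lam * u)) := by
      have := Real.add_one_le_exp (-(lam * u)); linarith
    have h2 : exp (lam * u) * (1 - lam * u) ≤ 1 := by
      calc exp (lam * u) * (1 - lam * u) ≤ exp (lam * u) * exp (-(lam * u)) :=
            mul_le_mul_of_nonneg_left h1 (exp_pos _).le
        _ = 1 := by rw [← Real.exp_add]; simp
    have hkey : 1 < (1 + lam) * (1 - lam * u) := by nlinarith
    nlinarith [exp_pos (lam * u)]

lemma exists_lam_gt (u : ℝ) (hu : 1 < u) :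
    ∃ lam : ℝ, 0 < lam ∧ lam < 1 ∧ exp (-(lam * u)) < 1 - lam := by
  set lam := (u - 1) / (2 * u) with hlam
  have hu0 : (0:ℝ) < u := by linarith
  have hlp : 0 < lam := div_pos (by linarith) (by linarith)
  have heq : lam * (2 * u) = u - 1 := by rw [hlam]; field_simp
  have hl1 : lam < 1 := by rw [hlam, div_lt_one (by linarith)]; linarith
  refine ⟨lam, hlp, hl1, ?_⟩
  have h1 : 1 + lam * u ≤ exp (lam * u) := by
    have := Real.add_one_le_exp (lam * u); linarith
  have h2 : exp (-(lam * u)) * (1 + lam * u) ≤ 1 := by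
    calc exp (-(lam * u)) * (1 + lam * u) ≤ exp (-(lam * u)) * exp (lam * u) :=
          mul_le_mul_of_nonneg_left h1 (exp_pos _).le
      _ = 1 := by rw [← Real.exp_add]; simp
  have hkey : 1 < (1 - lam) * (1 + lam * u) := by nlinarith
  nlinarith [exp_pos (-(lam * u)), mul_pos hlp hu0]

lemma rpow_neg_natCast {x : ℝ} (hx : 0 < x) (n : ℕ) : x ^ (-(n:ℝ)) = (x⁻¹) ^ n := by
  rw [Real.rpow_neg hx.le, Real.rpow_natCast, inv_pow]

lemma bound_eq_2n {x : ℝ} (y : ℝ) (hx : 0 < x) (n : ℕ) :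
    exp ((n:ℝ) * y) * x ^ (-(2*(n:ℝ))) = (exp y / x ^ 2) ^ n := by
  rw [Real.exp_nat_mul, show -(2*(n:ℝ)) = -(((2*n : ℕ)):ℝ) by push_cast; ring,
    rpow_neg_natCast hx, inv_pow, pow_mul, div_pow, ← inv_pow, inv_pow, div_eq_mul_inv]

lemma bound_eq_n1 {x : ℝ} (y : ℝ) (hx : 0 < x) (n : ℕ) :
    exp ((n:ℝ) * y) * x ^ (-((n:ℝ)+1)) = (exp y / x) ^ n * x⁻¹ := by
  rw [Real.exp_nat_mul, show -((n:ℝ)+1) = -(((n+1 : ℕ)):ℝ) by push_cast; ring,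
    rpow_neg_natCast hx, pow_succ, div_pow, inv_pow, div_eq_mul_inv]
  ring

lemma mixture_toReal {n : ℕ} (hn : 1 ≤ n) (t : ℝ) :
    (mixtureLaw n (Ioi t)).toReal =
      (1 / (n:ℝ)) * (gammaMeasure (2 * (n:ℝ)) 1 (Ioi t)).toReal +
      (1 - 1 / (n:ℝ)) * (gammaMeasure ((n:ℝ) + 1) 1 (Ioi t)).toReal := by
  have hn0 : (0:ℝ) < n := by exact_mod_cast hn
  have hP1 : IsProbabilityMeasure (gammaMeasure (2 * (n:ℝ)) 1) :=
    isProbabilityMeasure_gammaMeasure (by linarith) one_pos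
  have hP2 : IsProbabilityMeasure (gammaMeasure ((n:ℝ) + 1) 1) :=
    isProbabilityMeasure_gammaMeasure (by linarith) one_pos
  have hn1 : 1 / (n:ℝ) ≤ 1 := by
    rw [div_le_one hn0]; exact_mod_cast hn
  rw [mixtureLaw, Measure.add_apply, Measure.smul_apply, Measure.smul_apply,
    smul_eq_mul, smul_eq_mul,
    ENNReal.toReal_add (ENNReal.mul_ne_top ENNReal.ofReal_ne_top (measure_ne_top _ _))
      (ENNReal.mul_ne_top ENNReal.ofReal_ne_top (measure_ne_top _ _)),
    ENNReal.toReal_mul, ENNReal.toReal_mul,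
    ENNReal.toReal_ofReal (by positivity), ENNReal.toReal_ofReal (by linarith)]

theorem mixture_tail_asymptotics
    {α : Type*} [MeasurableSpace α] (μ : Measure α) [IsProbabilityMeasure μ]
    (τ : ℕ → α → ℝ) (hmeas : ∀ n, Measurable (τ n))
    (hlaw : ∀ n : ℕ, 1 ≤ n → μ.map (τ n) = mixtureLaw n) (s : ℝ) :
    (s < 1 → Tendsto (fun n : ℕ =>
        (n : ℝ) * (μ {ω | (n : ℝ) * s < τ n ω}).toReal) atTop atTop) ∧
    (1 < s → s < 2 → Tendsto (fun n : ℕ =>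
        (n : ℝ) * (μ {ω | (n : ℝ) * s < τ n ω}).toReal) atTop (nhds 1)) ∧
    (2 < s → Tendsto (fun n : ℕ =>
        (n : ℝ) * (μ {ω | (n : ℝ) * s < τ n ω}).toReal) atTop (nhds 0)) := by
  set p : ℕ → ℝ := fun n => (gammaMeasure (2 * (n:ℝ)) 1 (Ioi ((n:ℝ) * s))).toReal with hp
  set q : ℕ → ℝ := fun n => (gammaMeasure ((n:ℝ) + 1) 1 (Ioi ((n:ℝ) * s))).toReal with hq
  have hF : ∀ n : ℕ, 1 ≤ n →
      (n : ℝ) * (μ {ω | (n : ℝ) * s < τ n ω}).toReal = p n + ((n:ℝ) - 1) * q n := by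
    intro n hn
    have hn0 : ((n:ℝ)) ≠ 0 := by
      have : (0:ℝ) < n := by exact_mod_cast hn
      exact this.ne'
    have hset : {ω | (n : ℝ) * s < τ n ω} = τ n ⁻¹' (Ioi ((n:ℝ) * s)) := rfl
    rw [hset, ← Measure.map_apply (hmeas n) measurableSet_Ioi, hlaw n hn,
      mixture_toReal hn]
    field_simp
    simp only [hp, hq, mul_comm (n:ℝ) 2]
  have hp0 : ∀ n, 0 ≤ p n := fun n => ENNReal.toReal_nonneg
  have hq0 : ∀ n, 0 ≤ q n := fun n => ENNReal.toReal_nonneg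
  refine ⟨?_, ?_, ?_⟩
  · -- case s < 1
    intro hs
    obtain ⟨lam, hlp, hle⟩ := exists_lam_lt s hs
    have h1l : (0:ℝ) < 1 + lam := by linarith
    set ρ : ℝ := exp (lam * s) / (1 + lam) with hρ
    have hρ0 : 0 ≤ ρ := div_nonneg (exp_nonneg _) h1l.le
    have hρ1 : ρ < 1 := (div_lt_one h1l).2 hle
    have hqlb : ∀ n : ℕ, 1 - ρ ^ n ≤ q n := by
      intro n
      have h := toReal_tail_lb (a := (n:ℝ) + 1) (by positivity) hlp (t := (n:ℝ) * s)
      have heq : exp (lam * ((n:ℝ) * s)) * (1 + lam) ^ (-((n:ℝ)+1))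
          = ρ ^ n * (1 + lam)⁻¹ := by
        rw [show lam * ((n:ℝ) * s) = (n:ℝ) * (lam * s) by ring, bound_eq_n1 _ h1l]
      have hle2 : exp (lam * ((n:ℝ) * s)) * (1 + lam) ^ (-((n:ℝ)+1)) ≤ ρ ^ n := by
        rw [heq]
        have h3 : (1 + lam)⁻¹ ≤ 1 := by
          rw [inv_eq_one_div]
          exact (div_le_one h1l).2 (by linarith)
        nlinarith [pow_nonneg hρ0 n]
      exact le_trans (by linarith) h
    have hev : ∀ᶠ n : ℕ in atTop, ((n:ℝ) - 1) / 2 ≤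
        (n : ℝ) * (μ {ω | (n : ℝ) * s < τ n ω}).toReal := by
      have htρ : Tendsto (fun n : ℕ => ρ ^ n) atTop (nhds 0) :=
        tendsto_pow_atTop_nhds_zero_of_lt_one hρ0 hρ1
      filter_upwards [htρ.eventually_lt_const (by norm_num : (0:ℝ) < 1/2),
        eventually_ge_atTop 1] with n hρn hn1
      rw [hF n hn1]
      have hq1 : 1/2 ≤ q n := by linarith [hqlb n]
      have hn1' : (1:ℝ) ≤ n := by exact_mod_cast hn1
      nlinarith [hp0 n]
    refine tendsto_atTop_mono' atTop hev ?_
    apply Tendsto.atTop_div_const two_pos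
    exact tendsto_atTop_add_const_right _ (-1) tendsto_natCast_atTop_atTop
  · -- case 1 < s < 2
    intro hs1 hs2
    obtain ⟨lam1, h1p, h1l1, h1e⟩ := exists_lam_gt s hs1
    obtain ⟨lam2, h2p, h2e⟩ := exists_lam_lt (s/2) (by linarith)
    have h1l : (0:ℝ) < 1 - lam1 := by linarith
    have h2l : (0:ℝ) < 1 + lam2 := by linarith
    set ρ₁ : ℝ := exp (-(lam1 * s)) / (1 - lam1) with hρ₁
    set ρ₂ : ℝ := exp (lam2 * s) / (1 + lam2) ^ 2 with hρ₂
    have hρ₁0 : 0 ≤ ρ₁ := div_nonneg (exp_nonneg _) h1l.le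
    have hρ₁1 : ρ₁ < 1 := (div_lt_one h1l).2 h1e
    have hρ₂0 : 0 ≤ ρ₂ := div_nonneg (exp_nonneg _) (by positivity)
    have hρ₂1 : ρ₂ < 1 := by
      rw [hρ₂, div_lt_one (by positivity)]
      have : exp (lam2 * s) = exp (lam2 * (s/2)) * exp (lam2 * (s/2)) := by
        rw [← Real.exp_add]; ring_nf
      nlinarith [exp_pos (lam2 * (s/2))]
    have hplb : ∀ n : ℕ, 1 ≤ n → 1 - ρ₂ ^ n ≤ p n := by
      intro n hn
      have hn0 : (0:ℝ) < n := by exact_mod_cast hn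
      have h := toReal_tail_lb (a := 2 * (n:ℝ)) (by linarith) h2p (t := (n:ℝ) * s)
      have heq : exp (lam2 * ((n:ℝ) * s)) * (1 + lam2) ^ (-(2 * (n:ℝ)))
          = ρ₂ ^ n := by
        rw [show lam2 * ((n:ℝ) * s) = (n:ℝ) * (lam2 * s) by ring, bound_eq_2n _ h2l]
      rw [heq] at h
      exact h
    have hqub : ∀ n : ℕ, q n ≤ ρ₁ ^ n * (1 - lam1)⁻¹ := by
      intro n
      have ht : (0:ℝ) ≤ (n:ℝ) * s := mul_nonneg (Nat.cast_nonneg n) (by linarith)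
      have h := toReal_tail_ub (a := (n:ℝ) + 1) (by positivity) h1p h1l1 ht
      have heq : exp (-(lam1 * ((n:ℝ) * s))) * (1 - lam1) ^ (-((n:ℝ)+1))
          = ρ₁ ^ n * (1 - lam1)⁻¹ := by
        rw [show -(lam1 * ((n:ℝ) * s)) = (n:ℝ) * (-(lam1 * s)) by ring, bound_eq_n1 _ h1l]
      rw [heq] at h
      exact h
    have tp : Tendsto p atTop (nhds 1) := by
      have t1 : Tendsto (fun n : ℕ => 1 - ρ₂ ^ n) atTop (nhds 1) := by
        have := (tendsto_pow_atTop_nhds_zero_of_lt_one hρ₂0 hρ₂1).const_sub 1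
        simpa using this
      refine tendsto_of_tendsto_of_tendsto_of_le_of_le' t1 tendsto_const_nhds ?_ ?_
      · filter_upwards [eventually_ge_atTop 1] with n hn using hplb n hn
      · filter_upwards [eventually_ge_atTop 1] with n hn
        have hn0 : (0:ℝ) < n := by exact_mod_cast hn
        exact toReal_tail_le_one (by linarith) _
    have tq : Tendsto (fun n : ℕ => ((n:ℝ) - 1) * q n) atTop (nhds 0) := by
      have glim : Tendsto (fun n : ℕ => (n:ℝ) * ρ₁ ^ n * (1 - lam1)⁻¹) atTop (nhds 0) := by
        simpa using (tendsto_self_mul_const_pow_of_lt_one hρ₁0 hρ₁1).mul_const ((1 - lam1)⁻¹)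
      apply squeeze_zero' ?_ ?_ glim
      · filter_upwards [eventually_ge_atTop 1] with n hn
        have h1n : (1:ℝ) ≤ n := by exact_mod_cast hn
        nlinarith [hq0 n]
      · filter_upwards [eventually_ge_atTop 1] with n hn
        have h1n : (1:ℝ) ≤ n := by exact_mod_cast hn
        have h2 := mul_le_mul_of_nonneg_left (hqub n) (by linarith : (0:ℝ) ≤ (n:ℝ))
        nlinarith [hq0 n]
    have hsum := tp.add tq
    rw [add_zero] at hsum
    refine hsum.congr' ?_
    filter_upwards [eventually_ge_atTop 1] with n hn
    exact (hF n hn).symm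
  · -- case 2 < s
    intro hs
    obtain ⟨lam1, h1p, h1l1, h1e⟩ := exists_lam_gt s (by linarith)
    obtain ⟨lam2, h2p, h2l1, h2e⟩ := exists_lam_gt (s/2) (by linarith)
    have h1l : (0:ℝ) < 1 - lam1 := by linarith
    have h2l : (0:ℝ) < 1 - lam2 := by linarith
    set ρ₁ : ℝ := exp (-(lam1 * s)) / (1 - lam1) with hρ₁
    set ρ₂ : ℝ := exp (-(lam2 * s)) / (1 - lam2) ^ 2 with hρ₂
    have hρ₁0 : 0 ≤ ρ₁ := div_nonneg (exp_nonneg _) h1l.le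
    have hρ₁1 : ρ₁ < 1 := (div_lt_one h1l).2 h1e
    have hρ₂0 : 0 ≤ ρ₂ := div_nonneg (exp_nonneg _) (by positivity)
    have hρ₂1 : ρ₂ < 1 := by
      rw [hρ₂, div_lt_one (by positivity)]
      have : exp (-(lam2 * s)) = exp (-(lam2 * (s/2))) * exp (-(lam2 * (s/2))) := by
        rw [← Real.exp_add]; ring_nf
      nlinarith [exp_pos (-(lam2 * (s/2)))]
    have hpub : ∀ n : ℕ, 1 ≤ n → p n ≤ ρ₂ ^ n := by
      intro n hn
      have hn0 : (0:ℝ) < n := by exact_mod_cast hn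
      have ht : (0:ℝ) ≤ (n:ℝ) * s := mul_nonneg (Nat.cast_nonneg n) (by linarith)
      have h := toReal_tail_ub (a := 2 * (n:ℝ)) (by linarith) h2p h2l1 ht
      have heq : exp (-(lam2 * ((n:ℝ) * s))) * (1 - lam2) ^ (-(2 * (n:ℝ))) = ρ₂ ^ n := by
        rw [show -(lam2 * ((n:ℝ) * s)) = (n:ℝ) * (-(lam2 * s)) by ring, bound_eq_2n _ h2l]
      rw [heq] at h
      exact h
    have hqub : ∀ n : ℕ, q n ≤ ρ₁ ^ n * (1 - lam1)⁻¹ := by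
      intro n
      have ht : (0:ℝ) ≤ (n:ℝ) * s := mul_nonneg (Nat.cast_nonneg n) (by linarith)
      have h := toReal_tail_ub (a := (n:ℝ) + 1) (by positivity) h1p h1l1 ht
      have heq : exp (-(lam1 * ((n:ℝ) * s))) * (1 - lam1) ^ (-((n:ℝ)+1))
          = ρ₁ ^ n * (1 - lam1)⁻¹ := by
        rw [show -(lam1 * ((n:ℝ) * s)) = (n:ℝ) * (-(lam1 * s)) by ring, bound_eq_n1 _ h1l]
      rw [heq] at h
      exact h
    have glim : Tendsto (fun n : ℕ => ρ₂ ^ n + (n:ℝ) * ρ₁ ^ n * (1 - lam1)⁻¹)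
        atTop (nhds 0) := by
      have g1 := tendsto_pow_atTop_nhds_zero_of_lt_one hρ₂0 hρ₂1
      have g2 : Tendsto (fun n : ℕ => (n:ℝ) * ρ₁ ^ n * (1 - lam1)⁻¹) atTop (nhds 0) := by
        simpa using (tendsto_self_mul_const_pow_of_lt_one hρ₁0 hρ₁1).mul_const ((1 - lam1)⁻¹)
      simpa using g1.add g2
    apply squeeze_zero' ?_ ?_ glim
    · filter_upwards [eventually_ge_atTop 1] with n hn
      rw [hF n hn]
      have h1n : (1:ℝ) ≤ n := by exact_mod_cast hn
      nlinarith [hp0 n, hq0 n]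
    · filter_upwards [eventually_ge_atTop 1] with n hn
      rw [hF n hn]
      have h1n : (1:ℝ) ≤ n := by exact_mod_cast hn
      have h2 := mul_le_mul_of_nonneg_left (hqub n) (by linarith : (0:ℝ) ≤ (n:ℝ))
      have h3 := hpub n hn
      have h4 := hq0 n
      linarith [h2, h3, h4]
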